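/- arXiv:2210.13020 — 11 statements merged into one kernel-verified Lean document; each statement's English description precedes it below -/
import Mathlib

section
/- Let X be a complete lattice and s a monotone function on X. For each x, define s^*(x) as the least fixpoint of y ↦ x ⊔ s(y). Then s^* is the least closure operator above s, i.e., s^* is monotone, id ≤ s^*, s^* ∘ s^* ≤ s^*, s ≤ s^*, and for any closure c with s ≤ c we have s^* ≤ c. -/
/-- The least (pre)fixpoint of `y ↦ x ⊔ s y` (Knaster–Tarski). -/
def lstar {X : Type*} [CompleteLattice X] (s : X → X) (x : X) : X :=
  sInf {y | x ⊔ s y ≤ y}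

lemma lstar_mem {X : Type*} [CompleteLattice X] (s : X → X) (hs : Monotone s) (x : X) :
    x ⊔ s (lstar s x) ≤ lstar s x := by
  apply le_sInf
  intro y hy
  exact sup_le (le_trans le_sup_left hy)
    (le_trans (hs (sInf_le hy)) (le_trans le_sup_right hy))

lemma lstar_le {X : Type*} [CompleteLattice X] (s : X → X) {x y : X}
    (h : x ⊔ s y ≤ y) : lstar s x ≤ y := sInf_le h

/-- For monotone `s` on a complete lattice, `s^*` is the least closure above `s`:
it is monotone, extensive, idempotent, above `s`, and below every closure above `s`. -/
theorem lstar_least_closure {X : Type*} [CompleteLattice X] (s : X → X) (hs : Monotone s) :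
    Monotone (lstar s) ∧
    (∀ x, x ≤ lstar s x) ∧
    (∀ x, lstar s (lstar s x) ≤ lstar s x) ∧
    (∀ x, s x ≤ lstar s x) ∧
    (∀ c : X → X, Monotone c → (∀ x, x ≤ c x) → (∀ x, c (c x) ≤ c x) →
      (∀ x, s x ≤ c x) → ∀ x, lstar s x ≤ c x) := by
  have hext : ∀ x : X, x ≤ lstar s x := fun x =>
    le_trans le_sup_left (lstar_mem s hs x)
  have hslstar : ∀ x : X, s (lstar s x) ≤ lstar s x := fun x =>
    le_trans le_sup_right (lstar_mem s hs x)
  refine ⟨?_, hext, ?_, ?_, ?_⟩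
  · intro a b hab
    exact lstar_le s (sup_le (hab.trans (hext b)) (hslstar b))
  · intro x
    exact lstar_le s (sup_le le_rfl (hslstar x))
  · intro x
    exact le_trans (hs (hext x)) (hslstar x)
  · intro c hc hce hci hsc x
    refine lstar_le s (sup_le (hce x) ?_)
    exact le_trans (hsc (c x)) (hci x)
end

section
/- Let s, f be monotone functions on a complete lattice and c a closure. If s ∘ f ≤ f ∘ c, then s^* ∘ f ≤ f ∘ c. -/
/-- If `s ∘ f ≤ f ∘ c` for a closure `c`, then `s^* ∘ f ≤ f ∘ c`. -/
theorem lstar_comp_le {X : Type*} [CompleteLattice X] (s f c : X → X)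
    (hs : Monotone s) (hf : Monotone f)
    (hc_mono : Monotone c) (hc_ext : ∀ x, x ≤ c x) (hc_idem : ∀ x, c (c x) ≤ c x)
    (h : ∀ x, s (f x) ≤ f (c x)) :
    ∀ x, lstar s (f x) ≤ f (c x) := by
  intro x
  apply sInf_le
  exact sup_le (hf (hc_ext x)) ((h (c x)).trans (hf (hc_idem x)))
end

section
/- Let s be a monotone function on a complete lattice, f a linear function (one preserving all joins), and c a closure. If f ∘ s ≤ c ∘ f, then f ∘ s^* ≤ c ∘ f. -/
/-- If `f` is linear (preserves all joins), `c` is a closure and `f ∘ s ≤ c ∘ f`,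
then `f ∘ s^* ≤ c ∘ f`. -/
theorem comp_lstar_le {X : Type*} [CompleteLattice X] (s f c : X → X)
    (hs : Monotone s)
    (hf_lin : ∀ S : Set X, f (sSup S) = ⨆ x ∈ S, f x)
    (hc_mono : Monotone c) (hc_ext : ∀ x, x ≤ c x) (hc_idem : ∀ x, c (c x) ≤ c x)
    (h : ∀ x, f (s x) ≤ c (f x)) :
    ∀ x, f (lstar s x) ≤ c (f x) := by
  have hf_mono : Monotone f := by
    intro a b hab
    have : f (sSup {a, b}) = ⨆ x ∈ ({a, b} : Set X), f x := hf_lin _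
    rw [sSup_pair, sup_eq_right.mpr hab] at this
    rw [this]
    exact le_iSup₂ (f := fun x _ => f x) a (by simp)
  intro x
  set Y : Set X := {z | f z ≤ c (f x)} with hY
  have hfy : f (sSup Y) ≤ c (f x) := by
    rw [hf_lin]
    exact iSup₂_le fun z hz => hz
  have hxY : x ∈ Y := hc_ext _
  have hsY : s (sSup Y) ∈ Y := by
    calc f (s (sSup Y)) ≤ c (f (sSup Y)) := h _
      _ ≤ c (c (f x)) := hc_mono hfy
      _ ≤ c (f x) := hc_idem _
  have hmem : sSup Y ∈ {y | x ⊔ s y ≤ y} :=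
    sup_le (le_sSup hxY) (le_sSup hsY)
  calc f (lstar s x) ≤ f (sSup Y) := hf_mono (sInf_le hmem)
    _ ≤ c (f x) := hfy
end

section
/- If s is an affine function on a complete lattice, then its least closure s^* is also affine. -/
lemma affine_mono {X : Type*} [CompleteLattice X] (s : X → X)
    (haff : ∀ S : Set X, S.Nonempty → s (sSup S) = ⨆ x ∈ S, s x) :
    Monotone s := by
  intro a b hab
  have h : s (sSup {a, b}) = ⨆ x ∈ ({a, b} : Set X), s x :=
    haff _ ⟨a, by simp⟩
  have h2 : sSup ({a, b} : Set X) = b := by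
    rw [sSup_pair]; exact sup_eq_right.mpr hab
  rw [h2] at h
  rw [iSup_pair] at h
  exact h ▸ le_sup_left

lemma lstar_prefix {X : Type*} [CompleteLattice X] (s : X → X)
    (hm : Monotone s) (x : X) : x ⊔ s (lstar s x) ≤ lstar s x := by
  apply le_sInf
  intro y hy
  exact le_trans (sup_le_sup_left (hm (sInf_le hy)) x) hy

/-- If `s` is affine (preserves all non-empty joins) then so is its least closure `s^*`. -/
theorem lstar_affine {X : Type*} [CompleteLattice X] (s : X → X)
    (haff : ∀ S : Set X, S.Nonempty → s (sSup S) = ⨆ x ∈ S, s x) :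
    ∀ S : Set X, S.Nonempty → lstar s (sSup S) = ⨆ x ∈ S, lstar s x := by
  intro S hS
  have hm : Monotone s := affine_mono s haff
  have hlm : Monotone (lstar s) := by
    intro a b hab
    apply sInf_le_sInf
    intro y hy
    exact le_trans (sup_le_sup_right hab _) hy
  apply le_antisymm
  · set Y := ⨆ x ∈ S, lstar s x with hY
    have hYsup : Y = sSup (lstar s '' S) := by
      rw [sSup_image]
    have hsY : s Y = ⨆ x ∈ S, s (lstar s x) := by
      rw [hYsup, haff _ (hS.image _)]
      rw [iSup_image]
    have h1 : sSup S ⊔ s Y ≤ Y := by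
      apply sup_le
      · apply sSup_le
        intro x hx
        calc x ≤ lstar s x := le_trans le_sup_left (lstar_prefix s hm x)
          _ ≤ Y := le_iSup₂ (f := fun x _ => lstar s x) x hx
      · rw [hsY]
        apply iSup₂_le
        intro x hx
        calc s (lstar s x) ≤ lstar s x := le_trans le_sup_right (lstar_prefix s hm x)
          _ ≤ Y := le_iSup₂ (f := fun x _ => lstar s x) x hx
    exact sInf_le h1
  · exact iSup₂_le fun x hx => hlm (le_sSup hx)
end

section
/- In a quantale, if s is a contextual monotone function, then its least closure s^* is contextual. -/
/-- In a quantale (a complete lattice with a monoid multiplication distributing over all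
joins), if `s` is a contextual monotone function then its least closure `s^*` is contextual. -/
theorem lstar_contextual {X : Type*} [CompleteLattice X] [Monoid X]
    (hdistl : ∀ (a : X) (S : Set X), a * sSup S = ⨆ b ∈ S, a * b)
    (hdistr : ∀ (a : X) (S : Set X), sSup S * a = ⨆ b ∈ S, b * a)
    (s : X → X) (hs : Monotone s)
    (hctx : ∀ x y z : X, x * s y * z ≤ s (x * y * z)) :
    ∀ x y z : X, x * lstar s y * z ≤ lstar s (x * y * z) := by
  -- multiplication is monotone in each argument
  have hml : ∀ a b c : X, b ≤ c → a * b ≤ a * c := by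
    intro a b c h
    have : a * sSup {b, c} = ⨆ d ∈ ({b, c} : Set X), a * d := hdistl a _
    have h2 : sSup ({b, c} : Set X) = c := by
      rw [sSup_pair, sup_eq_right.mpr h]
    rw [h2] at this
    rw [this]
    exact le_biSup (fun d => a * d) (Set.mem_insert b {c})
  have hmr : ∀ a b c : X, b ≤ c → b * a ≤ c * a := by
    intro a b c h
    have : sSup {b, c} * a = ⨆ d ∈ ({b, c} : Set X), d * a := hdistr a _
    have h2 : sSup ({b, c} : Set X) = c := by
      rw [sSup_pair, sup_eq_right.mpr h]
    rw [h2] at this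
    rw [this]
    exact le_biSup (fun d => d * a) (Set.mem_insert b {c})
  -- lstar is a prefixpoint
  have hpre : ∀ v : X, v ⊔ s (lstar s v) ≤ lstar s v := by
    intro v
    apply le_sInf
    intro w hw
    refine sup_le (le_trans le_sup_left hw) ?_
    refine le_trans (le_trans (hs (sInf_le hw)) ?_) hw
    exact le_sup_right
  intro x y z
  set L := lstar s (x * y * z) with hL
  set T : Set X := {w | x * w * z ≤ L} with hT
  set w0 := sSup T with hw0
  have hmem : x * w0 * z ≤ L := by
    have e1 : x * w0 = sSup ((fun b => x * b) '' T) := by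
      rw [hdistl, sSup_image]
    have e2 : x * w0 * z = ⨆ c ∈ (fun b => x * b) '' T, c * z := by
      rw [e1, hdistr]
    rw [e2]
    refine iSup₂_le ?_
    rintro c ⟨b, hb, rfl⟩
    exact hb
  have hyz : x * y * z ≤ L := le_trans le_sup_left (hpre (x * y * z))
  have hyT : y ∈ T := hyz
  have hsw0 : s w0 ∈ T := by
    show x * s w0 * z ≤ L
    refine le_trans (hctx x w0 z) ?_
    refine le_trans (hs hmem) ?_
    exact le_trans le_sup_right (hpre (x * y * z))
  have hpref : y ⊔ s w0 ≤ w0 := sup_le (le_sSup hyT) (le_sSup hsw0)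
  have hle : lstar s y ≤ w0 := sInf_le hpref
  calc x * lstar s y * z ≤ x * w0 * z := hmr z _ _ (hml x _ _ hle)
    _ ≤ L := hmem
end

section
/- Let H be a set of hypotheses (pairs of regular expressions e ≤ f over an alphabet Σ). The H-closure cl_H on languages over Σ, defined as the smallest function such that cl_H(L) ⊇ L and whenever u·⟦f⟧·v ⊆ cl_H(L) for some (e ≤ f) ∈ H and words u, v, also u·⟦e⟧·v ⊆ cl_H(L), satisfies cl_H(L) · cl_H(K) ⊆ cl_H(L · K) for all languages L, K. -/
/-- The one-step function associated with a set `H` of hypotheses `e ≤ f`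
(pairs of regular expressions): it adds `u·⟦e⟧·v` whenever `u·⟦f⟧·v ⊆ L`. -/
def onestep {α : Type*} (H : Set (RegularExpression α × RegularExpression α))
    (L : Language α) : Language α :=
  {w | ∃ p ∈ H, ∃ u v : List α,
    (∀ x ∈ p.2.matches', u ++ x ++ v ∈ L) ∧ ∃ x ∈ p.1.matches', w = u ++ x ++ v}

/-- The `H`-closure of a language: the least closure above the one-step function of `H`. -/
def clH {α : Type*} (H : Set (RegularExpression α × RegularExpression α)) :
    Language α → Language α :=
  lstar (onestep H)

lemma onestep_mono {α : Type*} (H : Set (RegularExpression α × RegularExpression α)) :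
    Monotone (onestep H) := by
  intro L M h w hw
  obtain ⟨p, hp, u, v, h2, x, hx, hw⟩ := hw
  exact ⟨p, hp, u, v, fun y hy => h (h2 y hy), x, hx, hw⟩

lemma le_clH {α : Type*} (H : Set (RegularExpression α × RegularExpression α))
    (L : Language α) : L ≤ clH H L :=
  le_sInf fun y hy => le_trans le_sup_left hy

lemma onestep_clH_le {α : Type*} (H : Set (RegularExpression α × RegularExpression α))
    (L : Language α) : onestep H (clH H L) ≤ clH H L :=
  le_sInf fun y hy => (onestep_mono H (sInf_le hy)).trans (le_sup_right.trans hy)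

lemma clH_le {α : Type*} (H : Set (RegularExpression α × RegularExpression α))
    (L y : Language α) (h1 : L ≤ y) (h2 : onestep H y ≤ y) : clH H L ≤ y :=
  sInf_le (sup_le h1 h2)

/-- The `H`-closure is contextual: `cl_H(L) · cl_H(K) ⊆ cl_H(L · K)`. -/
theorem clH_mul_le {α : Type*} (H : Set (RegularExpression α × RegularExpression α))
    (L K : Language α) : clH H L * clH H K ≤ clH H (L * K) := by
  have main : clH H L ≤ {w | ∀ k ∈ clH H K, w ++ k ∈ clH H (L * K)} := by
    apply clH_le
    · intro l hl
      have inner : clH H K ≤ {k | l ++ k ∈ clH H (L * K)} := by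
        apply clH_le
        · intro k hk
          exact le_clH H _ (Language.mem_mul.mpr ⟨l, hl, k, hk, rfl⟩)
        · rintro k ⟨p, hp, u, v, h2, x, hx, rfl⟩
          apply onestep_clH_le H (L * K)
          refine ⟨p, hp, l ++ u, v, fun y hy => ?_, x, hx, by simp⟩
          have : l ++ (u ++ y ++ v) ∈ clH H (L * K) := h2 y hy
          simpa [List.append_assoc] using this
      exact fun k hk => inner hk
    · rintro w ⟨p, hp, u, v, h2, x, hx, rfl⟩
      intro k hk
      apply onestep_clH_le H (L * K)
      refine ⟨p, hp, u, v ++ k, fun y hy => ?_, x, hx, by simp⟩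
      have := h2 y hy k hk
      simpa [List.append_assoc] using this
  intro w hw
  obtain ⟨a, ha, b, hb, rfl⟩ := Language.mem_mul.mp hw
  exact main ha b hb
end

section
/- If H is a set of hypotheses all of whose right-hand sides are words, then the one-step function H(L) = ⋃{u·⟦e⟧·v | (e ≤ w) ∈ H, u w v ∈ L} preserves all unions of languages (is linear), and consequently so is the closure cl_H. -/
/-- If all right-hand sides of `H` are words (their languages are singletons), then both the
one-step function of `H` and the closure `cl_H` are linear (preserve all joins). -/
theorem onestep_clH_linear {α : Type*}
    (H : Set (RegularExpression α × RegularExpression α))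
    (hw : ∀ p ∈ H, ∃ w : List α, p.2.matches' = {w}) :
    (∀ S : Set (Language α), onestep H (sSup S) = ⨆ L ∈ S, onestep H L) ∧
    (∀ S : Set (Language α), clH H (sSup S) = ⨆ L ∈ S, clH H L) := by
  set s := onestep H with hs
  -- onestep linear
  have hlin : ∀ S : Set (Language α), s (sSup S) = ⨆ L ∈ S, s L := by
    intro S
    ext w
    simp only [Language.mem_iSup]
    simp only [hs, onestep, Set.mem_setOf_eq, Language.mem_iSup]
    constructor
    · rintro ⟨p, hp, u, v, h1, x, hx, rfl⟩
      obtain ⟨w0, hw0⟩ := hw p hp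
      have := h1 w0 (by rw [hw0]; rfl)
      obtain ⟨L, hL, hmem⟩ : ∃ L ∈ S, u ++ w0 ++ v ∈ L := this
      exact ⟨L, hL, p, hp, u, v, by rw [hw0]; rintro y rfl; exact hmem, x, hx, rfl⟩
    · rintro ⟨L, hL, p, hp, u, v, h1, x, hx, rfl⟩
      exact ⟨p, hp, u, v, fun y hy => ⟨L, hL, h1 y hy⟩, x, hx, rfl⟩
  refine ⟨hlin, ?_⟩
  have hmono : Monotone s := by
    rintro L M hLM w ⟨p, hp, u, v, h1, hx⟩
    exact ⟨p, hp, u, v, fun y hy => hLM (h1 y hy), hx⟩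
  have hle : ∀ x : Language α, x ≤ lstar s x := fun x =>
    le_sInf fun y hy => le_trans le_sup_left hy
  have hsle : ∀ x : Language α, s (lstar s x) ≤ lstar s x := fun x =>
    le_sInf fun y hy => le_trans (hmono (sInf_le hy)) (le_trans le_sup_right hy)
  have hleast : ∀ x y : Language α, x ⊔ s y ≤ y → lstar s x ≤ y := fun x y h => sInf_le h
  have hmono' : Monotone (lstar s) := fun x x' hx =>
    sInf_le_sInf fun y hy => le_trans (sup_le_sup_right hx _) hy
  intro S
  show lstar s (sSup S) = ⨆ L ∈ S, lstar s L
  apply le_antisymm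
  · apply hleast
    refine sup_le (sSup_le fun L hL => le_trans (hle L) (le_iSup₂ (f := fun L _ => lstar s L) L hL)) ?_
    have : (⨆ L ∈ S, lstar s L) = sSup (lstar s '' S) := by rw [sSup_image]
    rw [this, hlin]
    refine iSup₂_le fun M hM => ?_
    obtain ⟨L, hL, rfl⟩ := hM
    exact le_trans (hsle L) (by rw [← this]; exact le_iSup₂ (f := fun L _ => lstar s L) L hL)
  · exact iSup₂_le fun L hL => hmono' (le_sSup hL)
end

section
/- Let l, r be functions on regular expressions over Σ with l linear (⟦l(e)⟧ = ⋃_{w ∈ ⟦e⟧} ⟦l(w)⟧) and r monotone (⟦e⟧ ⊆ ⟦f⟧ implies ⟦r(e)⟧ ⊆ ⟦r(f)⟧). Then the one-step functions on languages associated to H = {l(e) ≤ r(e) | e a regular expression} and H' = {l(w) ≤ r(w) | w ∈ Σ^*} are equal. -/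
/-- A word regarded as a regular expression (the product of its letters). -/
def ofWord {α : Type*} (w : List α) : RegularExpression α :=
  w.foldr (fun a e => RegularExpression.char a * e) 1

lemma matches'_ofWord {α : Type*} (w : List α) :
    (ofWord w).matches' = {w} := by
  induction w with
  | nil =>
    show (1 : RegularExpression α).matches' = _
    rw [RegularExpression.matches'_epsilon]
    rfl
  | cons a t ih =>
    have : ofWord (a :: t) = RegularExpression.char a * ofWord t := rfl
    rw [this, RegularExpression.matches'_mul, RegularExpression.matches'_char, ih]
    ext x
    constructor
    · rintro ⟨y, hy, z, hz, rfl⟩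
      replace hy : y = [a] := hy; replace hz : z = t := hz
      subst hy; subst hz; rfl
    · rintro rfl
      exact ⟨[a], rfl, t, rfl, rfl⟩

/-- If `l` is linear and `r` is monotone (on languages of regular expressions), then the
one-step functions associated with `H = {l(e) ≤ r(e) | e}` and
`H' = {l(w) ≤ r(w) | w a word}` coincide. -/
theorem onestep_univ_eq_onestep_words {α : Type*}
    (l r : RegularExpression α → RegularExpression α)
    (hl : ∀ e : RegularExpression α,
      (l e).matches' = ⋃ w ∈ e.matches', (l (ofWord w)).matches')
    (hr : ∀ e f : RegularExpression α,
      e.matches' ≤ f.matches' → (r e).matches' ≤ (r f).matches') :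
    onestep (Set.range fun e => (l e, r e)) =
      onestep (Set.range fun w : List α => (l (ofWord w), r (ofWord w))) := by
  ext L w
  constructor
  · rintro ⟨p, ⟨e, rfl⟩, u, v, hsub, x, hx, rfl⟩
    rw [hl e] at hx
    replace hx : ∃ i, ∃ _ : i ∈ e.matches', x ∈ (l (ofWord i)).matches' := Set.mem_iUnion₂.mp hx
    obtain ⟨w', hw', hx⟩ := hx
    refine ⟨_, ⟨w', rfl⟩, u, v, ?_, x, hx, rfl⟩
    intro y hy
    apply hsub
    apply hr (ofWord w') e ?_ hy
    rw [matches'_ofWord]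
    intro z hz
    replace hz : z = w' := hz
    exact hz ▸ hw'
  · rintro ⟨p, ⟨w', rfl⟩, u, v, hsub, x, hx, rfl⟩
    exact ⟨_, ⟨ofWord w', rfl⟩, u, v, hsub, x, hx, rfl⟩
end

section
/- Let H_i be a set of hypotheses whose right-hand sides are words and H_j a set whose left-hand sides are words, over a common alphabet. If no right-hand side of H_i has an overlap with any left-hand side of H_j, then H_i ∘ H_j ⊆ H_j ∘ H_i as one-step functions on languages. -/
/-- `(x, y, s, t)` is an overlap of the words `u` and `v`. -/
def IsOverlap {α : Type*} (u v x y s t : List α) : Prop :=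
  x ++ u ++ y = s ++ v ++ t ∧
    ((x = [] ∧ t = [] ∧ y.length < v.length) ∨
     (y = [] ∧ s = [] ∧ x.length < v.length) ∨
     (x = [] ∧ y = [] ∧ s ≠ [] ∧ t ≠ []) ∨
     (s = [] ∧ t = [] ∧ x ≠ [] ∧ y ≠ []))

lemma split_of_no_overlap {α : Type*} {wi wj u v u' v' : List α}
    (h : u ++ wi ++ v = u' ++ wj ++ v')
    (hno : ∀ x y s t : List α, ¬ IsOverlap wi wj x y s t) :
    (∃ m, u = u' ++ wj ++ m ∧ v' = m ++ wi ++ v) ∨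
    (∃ m, u' = u ++ wi ++ m ∧ v = m ++ wj ++ v') := by
  rw [List.append_assoc, List.append_assoc, List.append_eq_append_iff] at h
  rcases h with ⟨a, ha, h⟩ | ⟨a, ha, h⟩
  · -- u' = u ++ a, wi ++ v = a ++ (wj ++ v')
    rw [List.append_eq_append_iff] at h
    rcases h with ⟨b, hb, h⟩ | ⟨b, hb, h⟩
    · -- a = wi ++ b, v = b ++ (wj ++ v')
      exact Or.inr ⟨b, by simp [ha, hb], by simp [h]⟩
    · -- wi = a ++ b, wj ++ v' = b ++ v
      rw [List.append_eq_append_iff] at h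
      rcases h with ⟨c, hc, h⟩ | ⟨c, hc, h⟩
      · -- b = wj ++ c, v' = c ++ v ; wi = a ++ wj ++ c
        subst hc
        rcases eq_or_ne a [] with rfl | ha0
        · rcases eq_or_ne c [] with rfl | hc0
          · -- wi = wj
            rcases eq_or_ne wj [] with rfl | hw0
            · exact Or.inl ⟨[], by simp [ha], by simp [h, hb]⟩
            · exact absurd ⟨by simp [hb], Or.inl ⟨rfl, rfl, by
                simpa using List.length_pos_iff.mpr hw0⟩⟩ (hno [] [] [] [])
          · rcases eq_or_ne wj [] with rfl | hw0
            · exact Or.inl ⟨[], by simp [ha], by simp [h, hb]⟩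
            · exact absurd ⟨by simp [hb], Or.inr (Or.inl ⟨rfl, rfl, by
                simpa using List.length_pos_iff.mpr hw0⟩)⟩ (hno [] [] [] c)
        · rcases eq_or_ne c [] with rfl | hc0
          · rcases eq_or_ne wj [] with rfl | hw0
            · exact Or.inr ⟨[], by simp [ha, hb], by simp [h]⟩
            · exact absurd ⟨by simp [hb], Or.inl ⟨rfl, rfl, by
                simpa using List.length_pos_iff.mpr hw0⟩⟩ (hno [] [] a [])
          · exact absurd ⟨by simp [hb], Or.inr (Or.inr (Or.inl ⟨rfl, rfl, ha0, hc0⟩))⟩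
              (hno [] [] a c)
      · -- wj = b ++ c, v = c ++ v' ; wi = a ++ b
        rcases eq_or_ne b [] with rfl | hb0
        · exact Or.inr ⟨[], by simp [ha, hb], by simp [h, hc]⟩
        · exact absurd ⟨by simp [hb, hc], Or.inl ⟨rfl, rfl, by
            simp [hc, List.length_pos_iff.mpr hb0]⟩⟩ (hno [] c a [])
  · -- u = u' ++ a, wj ++ v' = a ++ (wi ++ v)
    rw [List.append_eq_append_iff] at h
    rcases h with ⟨b, hb, h⟩ | ⟨b, hb, h⟩
    · -- a = wj ++ b, v' = b ++ (wi ++ v)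
      exact Or.inl ⟨b, by simp [ha, hb], by simp [h]⟩
    · -- wj = a ++ b, wi ++ v = b ++ v'
      rw [List.append_eq_append_iff] at h
      rcases h with ⟨c, hc, h⟩ | ⟨c, hc, h⟩
      · -- b = wi ++ c, v = c ++ v' ; wj = a ++ wi ++ c
        subst hc
        rcases eq_or_ne a [] with rfl | ha0
        · rcases eq_or_ne c [] with rfl | hc0
          · rcases eq_or_ne wi [] with rfl | hw0
            · exact Or.inl ⟨[], by simp [ha, hb], by simp [h]⟩
            · exact absurd ⟨by simp [hb], Or.inl ⟨rfl, rfl, by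
                simpa [hb] using List.length_pos_iff.mpr hw0⟩⟩ (hno [] [] [] [])
          · rcases eq_or_ne wi [] with rfl | hw0
            · exact Or.inr ⟨[], by simp [ha], by simp [h, hb]⟩
            · exact absurd ⟨by simp [hb], Or.inl ⟨rfl, rfl, by
                simp [hb, List.length_pos_iff.mpr hw0]⟩⟩ (hno [] c [] [])
        · rcases eq_or_ne c [] with rfl | hc0
          · rcases eq_or_ne wi [] with rfl | hw0
            · exact Or.inl ⟨[], by simp [ha, hb], by simp [h]⟩
            · exact absurd ⟨by simp [hb], Or.inr (Or.inl ⟨rfl, rfl, by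
                simp [hb, List.length_pos_iff.mpr hw0]⟩)⟩ (hno a [] [] [])
          · exact absurd ⟨by simp [hb], Or.inr (Or.inr (Or.inr ⟨rfl, rfl, ha0, hc0⟩))⟩
              (hno a c [] [])
      · -- wi = b ++ c, v' = c ++ v ; wj = a ++ b
        rcases eq_or_ne b [] with rfl | hb0
        · exact Or.inl ⟨[], by simp [ha, hb], by simp [h, hc]⟩
        · exact absurd ⟨by simp [hb, hc], Or.inr (Or.inl ⟨rfl, rfl, by
            simp [hb, List.length_pos_iff.mpr hb0]⟩)⟩ (hno a [] [] c)

/-- If the right-hand sides of `Hi` and the left-hand sides of `Hj` are words, and there are no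
overlaps between them, then `Hi ∘ Hj ⊆ Hj ∘ Hi` as one-step functions on languages. -/
theorem onestep_comm_of_no_overlap {α : Type*}
    (Hi Hj : Set (RegularExpression α × RegularExpression α))
    (hi : ∀ p ∈ Hi, ∃ w : List α, p.2.matches' = {w})
    (hj : ∀ q ∈ Hj, ∃ w : List α, q.1.matches' = {w})
    (hno : ∀ p ∈ Hi, ∀ q ∈ Hj, ∀ u ∈ p.2.matches', ∀ v ∈ q.1.matches',
      ∀ x y s t : List α, ¬ IsOverlap u v x y s t) :
    ∀ L : Language α, onestep Hi (onestep Hj L) ≤ onestep Hj (onestep Hi L) := by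
  intro L w hw
  obtain ⟨p, hp, u, v, hsub, xi, hxi, rfl⟩ := hw
  obtain ⟨wi, hwi⟩ := hi p hp
  have hmemwi : wi ∈ p.2.matches' := by rw [hwi]; rfl
  obtain ⟨q, hq, u', v', hsub', wj', hwj', heq⟩ := hsub wi hmemwi
  obtain ⟨wj, hwj⟩ := hj q hq
  have hwj'' : wj' = wj := by rw [hwj] at hwj'; exact hwj'
  subst hwj''
  have hmemwj : wj' ∈ q.1.matches' := by rw [hwj]; rfl
  have hnov := hno p hp q hq wi hmemwi wj' hmemwj
  rcases split_of_no_overlap heq hnov with ⟨m, hu, hv'⟩ | ⟨m, hu', hv⟩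
  · refine ⟨q, hq, u', m ++ xi ++ v, ?_, wj', hmemwj, by rw [hu]; simp⟩
    intro x hx
    refine ⟨p, hp, u' ++ x ++ m, v, ?_, xi, hxi, by simp⟩
    intro z hz
    rw [hwi] at hz; replace hz := Set.mem_singleton_iff.mp hz
    subst hz
    have hL := hsub' x hx
    rw [hv'] at hL
    simpa [List.append_assoc] using hL
  · refine ⟨q, hq, u ++ xi ++ m, v', ?_, wj', hmemwj, by rw [hv]; simp⟩
    intro x hx
    refine ⟨p, hp, u, m ++ x ++ v', ?_, xi, hxi, by simp⟩
    intro z hz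
    rw [hwi] at hz; replace hz := Set.mem_singleton_iff.mp hz
    subst hz
    have hL := hsub' x hx
    rw [hu'] at hL
    simpa [List.append_assoc] using hL
end

section
/- For all words x, u, y, s, v, t with x u y = s v t, either |x u| ≤ |s|, or |s v| ≤ |x|, or there exist words l, r and an overlap (x', y', s', t') of u and v such that x = l x', s = l s', y = y' r, and t = t' r. -/
/-- Whenever `x u y = s v t`, either `u` occurs entirely before `v`, or entirely after `v`,
or `u` and `v` properly overlap (up to a common left context `l` and right context `r`). -/
theorem overlap_trichotomy {α : Type*} (x u y s v t : List α)
    (h : x ++ u ++ y = s ++ v ++ t) :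
    (x ++ u).length ≤ s.length ∨ (s ++ v).length ≤ x.length ∨
      ∃ l r x' y' s' t' : List α, IsOverlap u v x' y' s' t' ∧
        x = l ++ x' ∧ s = l ++ s' ∧ y = y' ++ r ∧ t = t' ++ r := by
  by_cases h1 : (x ++ u).length ≤ s.length
  · exact Or.inl h1
  by_cases h2 : (s ++ v).length ≤ x.length
  · exact Or.inr (Or.inl h2)
  right; right
  simp only [List.length_append, not_le] at h1 h2
  -- prefix / suffix facts
  have hxp : x <+: s ++ v ++ t := ⟨u ++ y, by simpa [List.append_assoc] using h⟩
  have hsp : s <+: s ++ v ++ t := ⟨v ++ t, by simp⟩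
  have hys : y <:+ s ++ v ++ t := ⟨x ++ u, h⟩
  have hts : t <:+ s ++ v ++ t := ⟨s ++ v, by simp⟩
  rcases le_or_gt x.length s.length with hx | hx
  · rcases le_or_gt t.length y.length with ht | ht
    · -- Case 1 : x ≤ s, t ≤ y : u and v overlap with u starting first (or aligned)
      obtain ⟨s', rfl⟩ := List.prefix_of_prefix_length_le hxp hsp hx
      obtain ⟨y', rfl⟩ := List.suffix_of_suffix_length_le hts hys ht
      have hm : u ++ y' = s' ++ v := by
        have h' : (u ++ y') ++ t = (s' ++ v) ++ t := by
          simpa [List.append_assoc] using h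
        exact List.append_cancel_right h' 
      have hlen : y'.length < v.length := by
        have := congrArg List.length hm
        simp only [List.length_append] at this h1
        omega
      exact ⟨x, t, [], y', s', [], ⟨by simpa using hm, Or.inl ⟨rfl, rfl, hlen⟩⟩,
        by simp, rfl, rfl, by simp⟩
    · rcases eq_or_lt_of_le hx with hx' | hx'
      ·
        have hxs : x = s := (List.prefix_of_prefix_length_le hxp hsp hx).eq_of_length hx'
        subst hxs
        obtain ⟨t', rfl⟩ := List.suffix_of_suffix_length_le hys hts ht.le
        have hm : u = v ++ t' := by
          have h' : u ++ y = (v ++ t') ++ y := by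
            simpa [List.append_assoc] using h
          exact List.append_cancel_right h' 
        have hv : 0 < v.length := by omega
        exact ⟨x, y, [], [], [], t', ⟨by simp [hm], Or.inr (Or.inl ⟨rfl, rfl, hv⟩)⟩,
          by simp, by simp, by simp, rfl⟩
      · -- Case 3 : x < s, y < t : v inside u
        obtain ⟨s', rfl⟩ := List.prefix_of_prefix_length_le hxp hsp hx
        obtain ⟨t', rfl⟩ := List.suffix_of_suffix_length_le hys hts ht.le
        have hs' : s' ≠ [] := by
          intro hh
          simp only [hh, List.append_nil, List.length_append] at hx'
          omega
        have ht' : t' ≠ [] := by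
          intro hh
          simp only [hh, List.nil_append, List.length_append] at ht
          omega
        have hm : u = s' ++ v ++ t' := by
          have h' : u ++ y = (s' ++ v ++ t') ++ y := by
            simpa [List.append_assoc] using h
          exact List.append_cancel_right h' 
        exact ⟨x, y, [], [], s', t',
          ⟨by simpa [List.append_assoc] using hm, Or.inr (Or.inr (Or.inl ⟨rfl, rfl, hs', ht'⟩))⟩,
          by simp, rfl, by simp, rfl⟩
  · rcases le_or_gt y.length t.length with hy | hy
    · -- Case 2 : s < x, y ≤ t : u overlaps into v from the left... v starts first
      obtain ⟨x', rfl⟩ := List.prefix_of_prefix_length_le hsp hxp hx.le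
      obtain ⟨t', rfl⟩ := List.suffix_of_suffix_length_le hys hts hy
      have hm : x' ++ u = v ++ t' := by
        have h' : (x' ++ u) ++ y = (v ++ t') ++ y := by
          simpa [List.append_assoc] using h
        exact List.append_cancel_right h' 
      have hlen : x'.length < v.length := by
        have := congrArg List.length hm
        simp only [List.length_append] at this h2
        omega
      exact ⟨s, y, x', [], [], t', ⟨by simpa using hm, Or.inr (Or.inl ⟨rfl, rfl, hlen⟩)⟩,
        rfl, by simp, by simp, rfl⟩
    · -- Case 4 : s < x, t < y : u inside v
      obtain ⟨x', rfl⟩ := List.prefix_of_prefix_length_le hsp hxp hx.le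
      obtain ⟨y', rfl⟩ := List.suffix_of_suffix_length_le hts hys hy.le
      have hx' : x' ≠ [] := by
        intro hh
        simp only [hh, List.append_nil, List.length_append] at hx
        omega
      have hy' : y' ≠ [] := by
        intro hh
        simp only [hh, List.nil_append, List.length_append] at hy
        omega
      have hm : x' ++ u ++ y' = v := by
        have h' : (x' ++ u ++ y') ++ t = v ++ t := by
          simpa [List.append_assoc] using h
        exact List.append_cancel_right h' 
      exact ⟨s, t, x', y', [], [],
        ⟨by simpa using hm, Or.inr (Or.inr (Or.inr ⟨rfl, rfl, hx', hy'⟩))⟩,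
        rfl, by simp, rfl, by simp⟩
end

section
/- Let H₀ = {e ≤ 0} for a regular expression e over Σ. Then the one-step function of H₀ on languages is the constant function L ↦ Σ^*·⟦e⟧·Σ^*, it is affine, satisfies H₀ ∘ H ⊆ H₀ for every set H of hypotheses, and cl_{H₀ ∪ H} = cl_H ∘ cl_{H₀}. -/
lemma onestep_zero_const {α : Type*} (e : RegularExpression α) (L : Language α) :
    onestep {(e, (0 : RegularExpression α))} L = (⊤ : Language α) * e.matches' * ⊤ := by
  ext w
  constructor
  · rintro ⟨p, hp, u, v, -, x, hx, rfl⟩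
    rcases hp with rfl
    exact ⟨u ++ x, ⟨u, trivial, x, hx, rfl⟩, v, trivial, rfl⟩
  · rintro ⟨ux, ⟨u, -, x, hx, rfl⟩, v, -, rfl⟩
    exact ⟨(e, 0), rfl, u, v, by simp [Language.notMem_zero], x, hx, rfl⟩

lemma onestep_union {α : Type*} (A B : Set (RegularExpression α × RegularExpression α))
    (L : Language α) : onestep (A ∪ B) L = onestep A L ⊔ onestep B L := by
  ext w
  constructor
  · rintro ⟨p, hp | hp, rest⟩
    · exact Or.inl ⟨p, hp, rest⟩
    · exact Or.inr ⟨p, hp, rest⟩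
  · rintro (⟨p, hp, rest⟩ | ⟨p, hp, rest⟩)
    · exact ⟨p, Or.inl hp, rest⟩
    · exact ⟨p, Or.inr hp, rest⟩

lemma clH_zero {α : Type*} (e : RegularExpression α) (L : Language α) :
    clH {(e, (0 : RegularExpression α))} L = L ⊔ (⊤ : Language α) * e.matches' * ⊤ := by
  unfold clH lstar
  apply le_antisymm
  · exact sInf_le (by simp [onestep_zero_const])
  · refine le_sInf fun y hy => ?_
    rw [Set.mem_setOf_eq, onestep_zero_const] at hy
    exact hy

/-- For `H₀ = {e ≤ 0}`: its one-step function is the constant `Σ^*·⟦e⟧·Σ^*`, it is affine,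
`H₀ ∘ H ⊆ H₀` for every set of hypotheses `H`, and `cl_{H₀ ∪ H} = cl_H ∘ cl_{H₀}`. -/
theorem onestep_le_zero {α : Type*} (e : RegularExpression α) :
    (∀ L : Language α, onestep {(e, (0 : RegularExpression α))} L =
        (⊤ : Language α) * e.matches' * ⊤) ∧
    (∀ S : Set (Language α), S.Nonempty →
        onestep {(e, (0 : RegularExpression α))} (sSup S) =
          ⨆ L ∈ S, onestep {(e, (0 : RegularExpression α))} L) ∧
    (∀ H : Set (RegularExpression α × RegularExpression α), ∀ L : Language α,
        onestep {(e, (0 : RegularExpression α))} (onestep H L) ≤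
          onestep {(e, (0 : RegularExpression α))} L) ∧
    (∀ H : Set (RegularExpression α × RegularExpression α), ∀ L : Language α,
        clH ({(e, (0 : RegularExpression α))} ∪ H) L =
          clH H (clH {(e, (0 : RegularExpression α))} L)) := by
  refine ⟨onestep_zero_const e, ?_, ?_, ?_⟩
  · intro S hS
    obtain ⟨L, hL⟩ := hS
    apply le_antisymm
    · rw [onestep_zero_const]
      exact le_trans (onestep_zero_const e L).ge (le_iSup₂ (f := fun L _ => onestep {(e, (0 : RegularExpression α))} L) L hL)
    · exact iSup₂_le fun M _ => by rw [onestep_zero_const, onestep_zero_const]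
  · intro H L
    rw [onestep_zero_const, onestep_zero_const]
  · intro H L
    rw [clH_zero]
    unfold clH lstar
    congr 1
    ext y
    rw [Set.mem_setOf_eq, Set.mem_setOf_eq, onestep_union, onestep_zero_const,
      sup_assoc, sup_comm ((⊤ : Language α) * e.matches' * ⊤), ← sup_assoc]
end
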